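/- Let a < 0 and b ∈ ℝ. Then ∫_ℝ | Φ(ax + b) − 1{x < 0} | dx = ( 2φ(b) + 2Φ(b)b − b ) / (−a), where Φ and φ denote the standard normal distribution function and density function, respectively. -/

import Mathlib

open MeasureTheory Filter Topology Asymptotics
open scoped ENNReal NNReal symmDiff

noncomputable section

namespace LSBS

attribute [local instance] Classical.propDecidable

/-- The standard normal density `φ`. -/
def gpdf (t : ℝ) : ℝ := (Real.sqrt (2 * Real.pi))⁻¹ * Real.exp (-(t ^ 2) / 2)

/-- The standard normal distribution function `Φ`. -/
def gcdf (t : ℝ) : ℝ := ∫ u in Set.Iic t, gpdf u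

variable {d : ℕ}

/-- Euclidean space `ℝ^d`. -/
abbrev Evec (d : ℕ) := EuclideanSpace ℝ (Fin d)

/-- `μ_{f₀}(A) = ∫_A f₀(x) dx`. -/
def muF (f₀ : Evec d → ℝ) (A : Set (Evec d)) : ℝ := ∫ x in A, f₀ x

/-- The positive semidefinite square root of a matrix (junk value `0` if not psd). -/
def matSqrt (H : Matrix (Fin d) (Fin d) ℝ) : Matrix (Fin d) (Fin d) ℝ :=
  if h : H.PosSemidef then
    h.1.eigenvectorUnitary.1 * Matrix.diagonal ((RCLike.ofReal : ℝ → ℝ) ∘ Real.sqrt ∘ h.1.eigenvalues) *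
      (star h.1.eigenvectorUnitary : Matrix (Fin d) (Fin d) ℝ)
  else 0

/-- `H^{-1/2}`, the inverse of the psd square root. -/
def invSqrt (H : Matrix (Fin d) (Fin d) ℝ) : Matrix (Fin d) (Fin d) ℝ := (matSqrt H)⁻¹

/-- Apply a matrix to a Euclidean vector. -/
def mApply (M : Matrix (Fin d) (Fin d) ℝ) (v : Evec d) : Evec d := Matrix.toEuclideanLin M v

/-- Entrywise sup-norm of a matrix. -/
def matNorm (M : Matrix (Fin d) (Fin d) ℝ) : ℝ := ⨆ i, ⨆ j, |M i j|

/-- The kernel density estimator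
`f̂_{n,H}(x) = n⁻¹ ∑_{i<n} K(H^{-1/2}(x - Xᵢ)) |H|^{-1/2}`. -/
def kde (K : Evec d → ℝ) (H : Matrix (Fin d) (Fin d) ℝ) (X : ℕ → Evec d) (n : ℕ)
    (x : Evec d) : ℝ :=
  (n : ℝ)⁻¹ * ∑ i ∈ Finset.range n, K (mApply (invSqrt H) (x - X i)) * H.det ^ (-(1 : ℝ) / 2)

/-- `R(K) = ∫ K² dλ`. -/
def RK (K : Evec d → ℝ) : ℝ := ∫ x, (K x) ^ 2

/-- The Hessian matrix of `f` at `x`, via the second iterated Fréchet derivative. -/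
def hessian (f : Evec d → ℝ) (x : Evec d) : Matrix (Fin d) (Fin d) ℝ :=
  Matrix.of fun i j =>
    iteratedFDeriv ℝ 2 f x ![EuclideanSpace.single i (1 : ℝ), EuclideanSpace.single j (1 : ℝ)]

/-- `D₁(x,H) = ½ μ₂(K) tr(H ∇²f₀(x))`. -/
def D1 (μ₂ : ℝ) (f₀ : Evec d → ℝ) (H : Matrix (Fin d) (Fin d) ℝ) (x : Evec d) : ℝ :=
  (1 / 2) * μ₂ * (H * hessian f₀ x).trace

/-- Eigenvalues of a symmetric matrix (junk value `0` if not Hermitian). -/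
def eigs (H : Matrix (Fin d) (Fin d) ℝ) : Fin d → ℝ :=
  if h : H.IsHermitian then h.eigenvalues else 0

/-- Largest eigenvalue. -/
def lamMax (H : Matrix (Fin d) (Fin d) ℝ) : ℝ := ⨆ i, eigs H i

/-- Smallest eigenvalue. -/
def lamMin (H : Matrix (Fin d) (Fin d) ℝ) : ℝ := ⨅ i, eigs H i

/-- `f_τ(f) = inf { y > 0 : ∫ f 1{f ≥ y} dλ ≤ 1 - τ }`. -/
def tauLevel (τ : ℝ) (f : Evec d → ℝ) : ℝ :=
  sInf {y : ℝ | 0 < y ∧ (∫ x in {z | y ≤ f z}, f x) ≤ 1 - τ}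

/-- Variant of `tauLevel` with `y ≥ 0`. -/
def tauLevel0 (τ : ℝ) (f : Evec d → ℝ) : ℝ :=
  sInf {y : ℝ | 0 ≤ y ∧ (∫ x in {z | y ≤ f z}, f x) ≤ 1 - τ}

/-- The super-level set `{x : f(x) ≥ c}`. -/
def supLevel (f : Evec d → ℝ) (c : ℝ) : Set (Evec d) := {x | c ≤ f x}

/-- The level set (contour) `{x : f(x) = c}`. -/
def levelSet (f : Evec d → ℝ) (c : ℝ) : Set (Evec d) := {x | f x = c}

/-- `S^δ = ∪_{x ∈ S} B(x,δ)`. -/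
def tube (S : Set (Evec d)) (δ : ℝ) : Set (Evec d) := ⋃ x ∈ S, Metric.closedBall x δ

/-- `f` is a probability density on `ℝ^d`. -/
structure IsDensity (f : Evec d → ℝ) : Prop where
  nonneg : ∀ x, 0 ≤ f x
  integrable : MeasureTheory.Integrable f
  total : (∫ x, f x) = 1

/-- VC-type uniform covering number bound for a class of functions, with envelope. -/
def VCClass (𝓕 : Set (Evec d → ℝ)) : Prop :=
  ∃ F : Evec d → ℝ, (∀ f ∈ 𝓕, ∀ x, |f x| ≤ F x) ∧
    ∃ A v : ℝ, 0 < A ∧ 0 < v ∧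
      ∀ P : Measure (Evec d), IsProbabilityMeasure P → ∀ τ : ℝ, 0 < τ →
        ∃ G : Finset (Evec d → ℝ), (G.card : ℝ) ≤ (A / τ) ^ v ∧
          ∀ f ∈ 𝓕, ∃ g ∈ G, (∫ x, (f x - g x) ^ 2 ∂P) ≤ τ ^ 2 * ∫ x, (F x) ^ 2 ∂P

/-- The class `{ K(H^{-1/2}(t - ·)) : t ∈ ℝ^d, H ∈ 𝒮 }`. -/
def kerClass (K : Evec d → ℝ) : Set (Evec d → ℝ) :=
  {f | ∃ (t : Evec d) (H : Matrix (Fin d) (Fin d) ℝ), H.PosDef ∧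
    f = fun y => K (mApply (invSqrt H) (t - y))}

/-- The class `{ ‖∇K(H^{-1/2}(t - ·))‖ : t ∈ ℝ^d, H ∈ 𝒮 }`. -/
def gradKerClass (K : Evec d → ℝ) : Set (Evec d → ℝ) :=
  {f | ∃ (t : Evec d) (H : Matrix (Fin d) (Fin d) ℝ), H.PosDef ∧
    f = fun y => ‖gradient K (mApply (invSqrt H) (t - y))‖}

/-- Assumption K of the paper. -/
structure AssumptionK (K : Evec d → ℝ) (μ₂ : ℝ) : Prop where
  contDiff : ContDiff ℝ 1 K
  density : IsDensity K
  bounded : ∃ M, ∀ x, K x ≤ M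
  gradBounded : ∃ M, ∀ x, ‖gradient K x‖ ≤ M
  sqIntegrable : MeasureTheory.Integrable fun x => (K x) ^ 2
  gradProdIntegrable : ∀ i j : Fin d,
    MeasureTheory.Integrable fun x => gradient K x i * gradient K x j
  meanZero : ∀ i : Fin d, (∫ x, x i * K x) = 0
  secondMoment : ∀ i j : Fin d, (∫ x, x i * x j * K x) = if i = j then μ₂ else 0
  vcKer : VCClass (kerClass K)
  vcGradKer : VCClass (gradKerClass K)

/-- Assumption K2 of the paper: coordinatewise symmetry of `K` and square-integrable
first and second partial derivatives. -/
structure AssumptionK2 (K : Evec d → ℝ) : Prop where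
  symm : ∀ (x : Evec d) (i : Fin d),
    K (x - (2 * x i) • EuclideanSpace.single i (1 : ℝ)) = K x
  firstSq : ∀ i : Fin d, MeasureTheory.Integrable fun x => (gradient K x i) ^ 2
  secondSq : ∀ i j : Fin d, MeasureTheory.Integrable fun x => (hessian K x i j) ^ 2

/-- Assumption H of the paper, for the sequence of bandwidth matrices. -/
structure AssumptionH (Hseq : ℕ → Matrix (Fin d) (Fin d) ℝ) : Prop where
  symm : ∀ n, (Hseq n).IsSymm
  posDef : ∀ n, (Hseq n).PosDef
  detAnti : Antitone fun n => (Hseq n).det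
  detTendsto : Tendsto (fun n => (Hseq n).det) atTop (𝓝 0)
  ratio : Tendsto (fun n : ℕ => (n : ℝ) * (Hseq n).det ^ ((1 : ℝ) / 2) /
      Real.log ((Hseq n).det ^ (-(1 : ℝ) / 2))) atTop atTop
  loglog : Tendsto (fun n : ℕ => Real.log (Real.log (n : ℝ)) /
      Real.log ((Hseq n).det ^ (-(1 : ℝ) / 2))) atTop (𝓝 0)
  doubling : ∃ c : ℝ, 0 < c ∧ ∀ n,
      (Hseq n).det ^ ((1 : ℝ) / 2) ≤ c * (Hseq (2 * n)).det ^ ((1 : ℝ) / 2)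
  eigenComparable : (fun n => lamMax (Hseq n)) =O[atTop] fun n => lamMin (Hseq n)
  ratioMin : Tendsto (fun n : ℕ => (n : ℝ) * (Hseq n).det ^ ((1 : ℝ) / 2) * lamMin (Hseq n) /
      Real.log ((Hseq n).det ^ (-(1 : ℝ) / 2))) atTop atTop
  lamMaxBound : (fun n => lamMax (Hseq n)) =O[atTop]
      fun n : ℕ => (n : ℝ) ^ (-(2 : ℝ) / (4 + (d : ℝ)))

/-- Assumption H2 of the paper, for the pilot bandwidth sequences `H₀, H₁, H₂`. -/
structure AssumptionH2 (H0 H1 H2m : ℕ → Matrix (Fin d) (Fin d) ℝ) : Prop where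
  symm : ∀ n, (H0 n).IsSymm ∧ (H1 n).IsSymm ∧ (H2m n).IsSymm
  posDef : ∀ n, (H0 n).PosDef ∧ (H1 n).PosDef ∧ (H2m n).PosDef
  tendstoZero : ∀ i j, Tendsto (fun n => H0 n i j) atTop (𝓝 0) ∧
      Tendsto (fun n => H1 n i j) atTop (𝓝 0) ∧ Tendsto (fun n => H2m n i j) atTop (𝓝 0)
  r0 : Tendsto (fun n : ℕ => (n : ℝ)⁻¹ * (H0 n).det ^ (-(1 : ℝ) / 2)) atTop (𝓝 0)
  r1 : ∀ i j, Tendsto (fun n : ℕ => (n : ℝ)⁻¹ * (H1 n).det ^ (-(1 : ℝ) / 2) * (H1 n)⁻¹ i j)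
      atTop (𝓝 0)
  r2 : ∀ i j k l, Tendsto (fun n : ℕ => (n : ℝ)⁻¹ * (H2m n).det ^ (-(1 : ℝ) / 2) *
      ((H2m n)⁻¹ i j * (H2m n)⁻¹ k l)) atTop (𝓝 0)

/-- Assumption D1a of the paper (for the level-set problem at level `c`). -/
structure AssumptionD1a (f₀ : Evec d → ℝ) (c : ℝ) : Prop where
  bounded : BddAbove (Set.range f₀)
  smooth : ∃ a : ℝ, 0 < a ∧ ∃ V : Set (Evec d), IsOpen V ∧
    {x | c - a ≤ f₀ x ∧ f₀ x ≤ c + a} ⊆ V ∧ ContDiffOn ℝ 2 f₀ V ∧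
    (∃ M : ℝ, ∀ x ∈ V, ‖gradient f₀ x‖ ≤ M ∧ ∀ i j, |hessian f₀ x i j| ≤ M) ∧
    (∃ b : ℝ, 0 < b ∧ ∀ x, c - a ≤ f₀ x → f₀ x ≤ c + a → b ≤ ‖gradient f₀ x‖) ∧
    (∃ δ : ℝ, 0 < δ ∧ {x | c - a ≤ f₀ x ∧ f₀ x ≤ c + a} ⊆ tube (levelSet f₀ c) δ)

/-- Assumption D1b of the paper (for the HDR problem at level `f_{τ,0}`). -/
structure AssumptionD1b (f₀ : Evec d → ℝ) (ftau : ℝ) : Prop where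
  bounded : BddAbove (Set.range f₀)
  smooth : ContDiff ℝ 2 f₀
  derivBounded : ∃ M : ℝ, ∀ x, ‖gradient f₀ x‖ ≤ M ∧ ∀ i j, |hessian f₀ x i j| ≤ M
  levelNbhd : ∃ a : ℝ, 0 < a ∧
    (∃ b : ℝ, 0 < b ∧ ∀ x, ftau - a ≤ f₀ x → f₀ x ≤ ftau + a → b ≤ ‖gradient f₀ x‖) ∧
    (∃ δ : ℝ, 0 < δ ∧ {x | ftau - a ≤ f₀ x ∧ f₀ x ≤ ftau + a} ⊆ tube (levelSet f₀ ftau) δ)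

/-- Assumption D3 of the paper: four continuous, bounded, square-integrable derivatives. -/
structure AssumptionD3 (f₀ : Evec d → ℝ) : Prop where
  smooth : ContDiff ℝ 4 f₀
  bounded : ∀ k : ℕ, k ≤ 4 → ∃ M, ∀ x, ‖iteratedFDeriv ℝ k f₀ x‖ ≤ M
  sqIntegrable : ∀ k : ℕ, k ≤ 4 →
    MeasureTheory.Integrable fun x => ‖iteratedFDeriv ℝ k f₀ x‖ ^ 2

/-- `A_x = -‖∇f₀(x)‖ / √(R(K) c)`. -/
def Acoef (K : Evec d → ℝ) (f₀ : Evec d → ℝ) (c : ℝ) (x : Evec d) : ℝ :=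
  -(‖gradient f₀ x‖ / Real.sqrt (RK K * c))

/-- `B_x(H) = -√(n |H|^{1/2}) D₁(x,H) / √(R(K) c)`. -/
def Bcoef (K : Evec d → ℝ) (μ₂ : ℝ) (f₀ : Evec d → ℝ) (c : ℝ) (n : ℕ)
    (H : Matrix (Fin d) (Fin d) ℝ) (x : Evec d) : ℝ :=
  -(Real.sqrt ((n : ℝ) * H.det ^ ((1 : ℝ) / 2)) * D1 μ₂ f₀ H x / Real.sqrt (RK K * c))

/-- The asymptotic approximation `LS(H)` of the level-set risk. -/
def LSrisk (K : Evec d → ℝ) (μ₂ : ℝ) (f₀ : Evec d → ℝ) (c : ℝ) (n : ℕ)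
    (H : Matrix (Fin d) (Fin d) ℝ) : ℝ :=
  c / Real.sqrt ((n : ℝ) * H.det ^ ((1 : ℝ) / 2)) *
    ∫ x in levelSet f₀ c,
      (2 * gpdf (Bcoef K μ₂ f₀ c n H x) +
        2 * gcdf (Bcoef K μ₂ f₀ c n H x) * Bcoef K μ₂ f₀ c n H x -
        Bcoef K μ₂ f₀ c n H x) / -(Acoef K f₀ c x) ∂μH[(d : ℝ) - 1]

/-- `w₀ = (∫_{β_τ} ‖∇f₀‖⁻¹ dℋ)⁻¹`. -/
def w0 (f₀ : Evec d → ℝ) (ftau : ℝ) : ℝ :=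
  (∫ x in levelSet f₀ ftau, ‖gradient f₀ x‖⁻¹ ∂μH[(d : ℝ) - 1])⁻¹

/-- `V₁(H) = ∫_{β_τ} D₁(x,H)/‖∇f₀(x)‖ dℋ(x)`. -/
def V1 (μ₂ : ℝ) (f₀ : Evec d → ℝ) (ftau : ℝ) (H : Matrix (Fin d) (Fin d) ℝ) : ℝ :=
  ∫ x in levelSet f₀ ftau, D1 μ₂ f₀ H x / ‖gradient f₀ x‖ ∂μH[(d : ℝ) - 1]

/-- `V₂(H) = f_{τ,0}⁻¹ ∫_{L_τ} D₁(x,H) dx`. -/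
def V2 (μ₂ : ℝ) (f₀ : Evec d → ℝ) (ftau : ℝ) (H : Matrix (Fin d) (Fin d) ℝ) : ℝ :=
  ftau⁻¹ * ∫ x in supLevel f₀ ftau, D1 μ₂ f₀ H x

/-- `D₂(H) = w₀ (V₁(H) + V₂(H))`. -/
def D2c (μ₂ : ℝ) (f₀ : Evec d → ℝ) (ftau : ℝ) (H : Matrix (Fin d) (Fin d) ℝ) : ℝ :=
  w0 f₀ ftau * (V1 μ₂ f₀ ftau H + V2 μ₂ f₀ ftau H)

/-- `C_x(H) = B_x(H) + √(n|H|^{1/2}/(R(K) f_{τ,0})) D₂(H)`. -/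
def Ccoef (K : Evec d → ℝ) (μ₂ : ℝ) (f₀ : Evec d → ℝ) (ftau : ℝ) (n : ℕ)
    (H : Matrix (Fin d) (Fin d) ℝ) (x : Evec d) : ℝ :=
  Bcoef K μ₂ f₀ ftau n H x +
    Real.sqrt ((n : ℝ) * H.det ^ ((1 : ℝ) / 2) / (RK K * ftau)) * D2c μ₂ f₀ ftau H

/-- The asymptotic approximation `HDR(H)` of the HDR risk. -/
def HDRrisk (K : Evec d → ℝ) (μ₂ : ℝ) (f₀ : Evec d → ℝ) (ftau : ℝ) (n : ℕ)
    (H : Matrix (Fin d) (Fin d) ℝ) : ℝ :=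
  ftau / Real.sqrt ((n : ℝ) * H.det ^ ((1 : ℝ) / 2)) *
    ∫ x in levelSet f₀ ftau,
      (2 * gpdf (Ccoef K μ₂ f₀ ftau n H x) +
        2 * gcdf (Ccoef K μ₂ f₀ ftau n H x) * Ccoef K μ₂ f₀ ftau n H x -
        Ccoef K μ₂ f₀ ftau n H x) / -(Acoef K f₀ ftau x) ∂μH[(d : ℝ) - 1]

/-- `F_x = -½ μ₂(K) tr(∇²f(x)) / √(R(K) c)`, with a generic curvature function `fhess`. -/
def FxLS (K : Evec d → ℝ) (μ₂ c : ℝ) (fhess : Evec d → ℝ) (x : Evec d) : ℝ :=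
  -((1 / 2) * μ₂ * (hessian fhess x).trace / Real.sqrt (RK K * c))

/-- `A_x = -‖∇f(x)‖/√(R(K) c)`, with a generic gradient function `fgrad`. -/
def AxLS (K : Evec d → ℝ) (c : ℝ) (fgrad : Evec d → ℝ) (x : Evec d) : ℝ :=
  -(‖gradient fgrad x‖ / Real.sqrt (RK K * c))

/-- The (possibly plug-in) approximation `LS(h)` for bandwidths `h² I`:
`LS(h) = (c/(n h^d)^{1/2}) ∫_β [φ(B) + 2Φ(B)B − B]/(−A) dℋ` with
`B_x(h) = (n h^{d+4})^{1/2} F_x`. -/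
def LSgen (K : Evec d → ℝ) (μ₂ c : ℝ) (fgrad fhess : Evec d → ℝ) (β : Set (Evec d))
    (n : ℕ) (h : ℝ) : ℝ :=
  c / Real.sqrt ((n : ℝ) * h ^ d) *
    ∫ x in β,
      (gpdf (Real.sqrt ((n : ℝ) * h ^ (d + 4)) * FxLS K μ₂ c fhess x) +
        2 * gcdf (Real.sqrt ((n : ℝ) * h ^ (d + 4)) * FxLS K μ₂ c fhess x) *
          (Real.sqrt ((n : ℝ) * h ^ (d + 4)) * FxLS K μ₂ c fhess x) -
        Real.sqrt ((n : ℝ) * h ^ (d + 4)) * FxLS K μ₂ c fhess x) /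
        -(AxLS K c fgrad x) ∂μH[(d : ℝ) - 1]

/-- `AR_LS(s) = s^{−d/(d+4)} ∫_{β(c)} [φ(sF_x) + 2Φ(sF_x)sF_x − sF_x]/(−A_x) dℋ(x)`. -/
def ARLS (K : Evec d → ℝ) (μ₂ c : ℝ) (f₀ : Evec d → ℝ) (s : ℝ) : ℝ :=
  s ^ (-(d : ℝ) / ((d : ℝ) + 4)) *
    ∫ x in levelSet f₀ c,
      (gpdf (s * FxLS K μ₂ c f₀ x) + 2 * gcdf (s * FxLS K μ₂ c f₀ x) * (s * FxLS K μ₂ c f₀ x) -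
        s * FxLS K μ₂ c f₀ x) / -(AxLS K c f₀ x) ∂μH[(d : ℝ) - 1]

/-- `A_x = -‖∇f(x)‖/√(R(K) f_{τ,0})` (HDR version with generic gradient function). -/
def AxGen (K : Evec d → ℝ) (ftau : ℝ) (fgrad : Evec d → ℝ) (x : Evec d) : ℝ :=
  -(‖gradient fgrad x‖ / Real.sqrt (RK K * ftau))

/-- The quantity `G_x` of the HDR bandwidth-selection problem, with generic plug-ins. -/
def GxHDR (K : Evec d → ℝ) (μ₂ ftau : ℝ) (fgrad fhess : Evec d → ℝ)
    (β L : Set (Evec d)) (x : Evec d) : ℝ :=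
  -(μ₂ * (hessian fhess x).trace / Real.sqrt (RK K * ftau)) +
    ((∫ y in β, ‖gradient fgrad y‖⁻¹ ∂μH[(d : ℝ) - 1])⁻¹ *
        (∫ y in β, μ₂ * (hessian fhess y).trace / (2 * ‖gradient fgrad y‖)
          ∂μH[(d : ℝ) - 1]) +
      (∫ y in β, ‖gradient fgrad y‖⁻¹ ∂μH[(d : ℝ) - 1])⁻¹ / ftau *
        ∫ y in L, μ₂ * (hessian fhess y).trace / 2) / Real.sqrt (RK K * ftau)

/-- The (possibly plug-in) approximation `HDR(h)` for bandwidths `h² I`. -/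
def HDRgen (K : Evec d → ℝ) (μ₂ ftau : ℝ) (fgrad fhess : Evec d → ℝ)
    (β L : Set (Evec d)) (n : ℕ) (h : ℝ) : ℝ :=
  ftau / Real.sqrt ((n : ℝ) * h ^ d) *
    ∫ x in β,
      (gpdf (Real.sqrt ((n : ℝ) * h ^ (d + 4)) * GxHDR K μ₂ ftau fgrad fhess β L x) +
        2 * gcdf (Real.sqrt ((n : ℝ) * h ^ (d + 4)) * GxHDR K μ₂ ftau fgrad fhess β L x) *
          (Real.sqrt ((n : ℝ) * h ^ (d + 4)) * GxHDR K μ₂ ftau fgrad fhess β L x) -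
        Real.sqrt ((n : ℝ) * h ^ (d + 4)) * GxHDR K μ₂ ftau fgrad fhess β L x) /
        -(AxGen K ftau fgrad x) ∂μH[(d : ℝ) - 1]

/-- `AR_HDR(s) = s^{−d/(d+4)} ∫_{β_τ} [φ(sG_x) + 2Φ(sG_x)sG_x − sG_x]/(−A_x) dℋ(x)`. -/
def ARHDR (K : Evec d → ℝ) (μ₂ : ℝ) (f₀ : Evec d → ℝ) (ftau : ℝ) (s : ℝ) : ℝ :=
  s ^ (-(d : ℝ) / ((d : ℝ) + 4)) *
    ∫ x in levelSet f₀ ftau,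
      (gpdf (s * GxHDR K μ₂ ftau f₀ f₀ (levelSet f₀ ftau) (supLevel f₀ ftau) x) +
        2 * gcdf (s * GxHDR K μ₂ ftau f₀ f₀ (levelSet f₀ ftau) (supLevel f₀ ftau) x) *
          (s * GxHDR K μ₂ ftau f₀ f₀ (levelSet f₀ ftau) (supLevel f₀ ftau) x) -
        s * GxHDR K μ₂ ftau f₀ f₀ (levelSet f₀ ftau) (supLevel f₀ ftau) x) /
        -(AxGen K ftau f₀ x) ∂μH[(d : ℝ) - 1]

/-- `Yₙ = O_p(aₙ)`: boundedness in probability at rate `aₙ`. -/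
def IsBigOp {Ω : Type*} [MeasurableSpace Ω] (P : Measure Ω) (Y : ℕ → Ω → ℝ)
    (a : ℕ → ℝ) : Prop :=
  ∀ ε : ℝ, 0 < ε → ∃ C : ℝ, 0 < C ∧
    ∀ᶠ n in atTop, P {ω | C * |a n| < |Y n ω|} ≤ ENNReal.ofReal ε

lemma gpdf_eq : gpdf = ProbabilityTheory.gaussianPDFReal 0 1 := by
  funext x
  simp [gpdf, ProbabilityTheory.gaussianPDFReal]

lemma gpdf_nonneg (t : ℝ) : 0 ≤ gpdf t := by
  unfold gpdf; positivity

lemma integrable_gpdf : Integrable gpdf := by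
  rw [gpdf_eq]; exact ProbabilityTheory.integrable_gaussianPDFReal 0 1

lemma integral_gpdf : ∫ x, gpdf x = 1 := by
  rw [gpdf_eq]; exact ProbabilityTheory.integral_gaussianPDFReal_eq_one 0 one_ne_zero

lemma continuous_gpdf : Continuous gpdf := by
  unfold gpdf; fun_prop

lemma gpdf_neg (t : ℝ) : gpdf (-t) = gpdf t := by simp [gpdf]

lemma hasDerivAt_gpdf (t : ℝ) : HasDerivAt gpdf (-(t * gpdf t)) t := by
  have h : HasDerivAt (fun u : ℝ => -(u ^ 2) / 2) (-t) t := by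
    have := ((hasDerivAt_pow 2 t).neg).div_const 2
    simpa using this.congr_deriv (by ring)
  have h2 := (h.exp).const_mul (Real.sqrt (2 * Real.pi))⁻¹
  exact h2.congr_deriv (by unfold gpdf; ring)

lemma gpdf_tendsto_atTop : Tendsto gpdf atTop (𝓝 0) := by
  have h1 : Tendsto (fun t : ℝ => -(t ^ 2) / 2) atTop atBot := by
    apply Tendsto.atBot_div_const (by norm_num)
    exact tendsto_neg_atTop_atBot.comp (tendsto_pow_atTop two_ne_zero)
  have h2 := (Real.tendsto_exp_atBot.comp h1).const_mul (Real.sqrt (2 * Real.pi))⁻¹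
  rw [mul_zero] at h2
  exact h2

lemma gpdf_tendsto_atBot : Tendsto gpdf atBot (𝓝 0) := by
  have := gpdf_tendsto_atTop.comp tendsto_neg_atBot_atTop
  refine this.congr fun t => ?_
  simp [Function.comp, gpdf_neg]


lemma gcdf_sub_gcdf (s t : ℝ) : gcdf t - gcdf s = ∫ u in s..t, gpdf u :=
  intervalIntegral.integral_Iic_sub_Iic integrable_gpdf.integrableOn integrable_gpdf.integrableOn

lemma hasDerivAt_gcdf (t : ℝ) : HasDerivAt gcdf (gpdf t) t := by
  have h : ∀ x : ℝ, gcdf x = gcdf 0 + ∫ u in (0:ℝ)..x, gpdf u := by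
    intro x
    rw [← gcdf_sub_gcdf 0 x]; ring
  have hd : HasDerivAt (fun x => ∫ u in (0:ℝ)..x, gpdf u) (gpdf t) t :=
    intervalIntegral.integral_hasDerivAt_right integrable_gpdf.intervalIntegrable
      continuous_gpdf.aestronglyMeasurable.stronglyMeasurableAtFilter
      continuous_gpdf.continuousAt
  have : gcdf = fun x => gcdf 0 + ∫ u in (0:ℝ)..x, gpdf u := funext h
  rw [this]
  exact hd.const_add _

lemma gcdf_nonneg (t : ℝ) : 0 ≤ gcdf t :=
  setIntegral_nonneg measurableSet_Iic fun u _ => gpdf_nonneg u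

lemma gcdf_le_one (t : ℝ) : gcdf t ≤ 1 := by
  rw [← integral_gpdf]
  exact setIntegral_le_integral integrable_gpdf (ae_of_all _ gpdf_nonneg)

lemma integral_Ioi_gpdf (t : ℝ) : ∫ u in Set.Ioi t, gpdf u = 1 - gcdf t := by
  have h := intervalIntegral.integral_Iic_add_Ioi (b := t)
    integrable_gpdf.integrableOn integrable_gpdf.integrableOn
  rw [integral_gpdf] at h
  have : gcdf t + ∫ u in Set.Ioi t, gpdf u = 1 := h
  linarith

lemma gcdf_neg (t : ℝ) : gcdf (-t) = 1 - gcdf t := by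
  calc gcdf (-t) = ∫ x in Set.Ioi t, gpdf (-x) := (integral_comp_neg_Ioi t gpdf).symm
    _ = ∫ x in Set.Ioi t, gpdf x := by
        refine setIntegral_congr_fun measurableSet_Ioi fun x _ => gpdf_neg x
    _ = 1 - gcdf t := integral_Ioi_gpdf t

lemma integral_Ioi_id_mul_gpdf {t : ℝ} (ht : 0 ≤ t) :
    IntegrableOn (fun u => u * gpdf u) (Set.Ioi t) ∧
      (∫ u in Set.Ioi t, u * gpdf u) = gpdf t := by
  have hderiv : ∀ u ∈ Set.Ici t, HasDerivAt (fun u => -gpdf u) (u * gpdf u) u := fun u _ => by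
    have := (hasDerivAt_gpdf u).neg; exact this.congr_deriv (by ring)
  have hpos : ∀ u ∈ Set.Ioi t, 0 ≤ u * gpdf u := fun u hu =>
    mul_nonneg (le_trans ht (le_of_lt hu)) (gpdf_nonneg u)
  have hlim : Tendsto (fun u => -gpdf u) atTop (𝓝 0) := by
    simpa using gpdf_tendsto_atTop.neg
  refine ⟨integrableOn_Ioi_deriv_of_nonneg' hderiv hpos hlim, ?_⟩
  have h := integral_Ioi_of_hasDerivAt_of_nonneg' hderiv hpos hlim
  simpa using h

lemma mills (t : ℝ) (ht : 0 < t) : t * (1 - gcdf t) ≤ gpdf t := by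
  have h1 : (∫ u in Set.Ioi t, gpdf u) ≤ ∫ u in Set.Ioi t, t⁻¹ * (u * gpdf u) := by
    apply setIntegral_mono_on integrable_gpdf.integrableOn
      ((integral_Ioi_id_mul_gpdf ht.le).1.const_mul t⁻¹) measurableSet_Ioi
    intro u hu
    have hu' : t < u := hu
    have h2 : 1 ≤ t⁻¹ * u := by
      rw [← div_eq_inv_mul, le_div_iff₀ ht]
      linarith
    nlinarith [gpdf_nonneg u]
  rw [MeasureTheory.integral_const_mul, (integral_Ioi_id_mul_gpdf ht.le).2, integral_Ioi_gpdf] at h1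
  calc t * (1 - gcdf t) ≤ t * (t⁻¹ * gpdf t) :=
        mul_le_mul_of_nonneg_left h1 ht.le
    _ = gpdf t := by field_simp

lemma tendsto_D_atTop :
    Tendsto (fun t => t * (gcdf t - 1) + gpdf t) atTop (𝓝 0) := by
  have hsq : Tendsto (fun t => t * (1 - gcdf t)) atTop (𝓝 0) := by
    apply squeeze_zero' (f := fun t => t * (1 - gcdf t)) (g := gpdf)
    · filter_upwards [eventually_ge_atTop (0:ℝ)] with t ht
      exact mul_nonneg ht (by linarith [gcdf_le_one t])
    · filter_upwards [eventually_gt_atTop (0:ℝ)] with t ht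
      exact mills t ht
    · exact gpdf_tendsto_atTop
  have h := hsq.neg.add gpdf_tendsto_atTop
  rw [neg_zero, zero_add] at h
  refine h.congr fun t => by ring

lemma tendsto_G_atBot :
    Tendsto (fun t => t * gcdf t + gpdf t) atBot (𝓝 0) := by
  have h := tendsto_D_atTop.comp tendsto_neg_atBot_atTop
  refine h.congr fun t => ?_
  simp only [Function.comp, gcdf_neg, gpdf_neg]
  ring

lemma hasDerivAt_G (t : ℝ) :
    HasDerivAt (fun t => t * gcdf t + gpdf t) (gcdf t) t := by
  have h := ((hasDerivAt_id t).mul (hasDerivAt_gcdf t)).add (hasDerivAt_gpdf t)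
  exact h.congr_deriv (by simp only [id]; ring)


lemma hasDerivAt_G_affine {r : ℝ} (hr : r ≠ 0) (s x : ℝ) :
    HasDerivAt (fun x => r⁻¹ * ((r * x + s) * gcdf (r * x + s) + gpdf (r * x + s)))
      (gcdf (r * x + s)) x := by
  have h1 : HasDerivAt (fun x : ℝ => r * x + s) r x := by
    simpa using ((hasDerivAt_id x).const_mul r).add_const s
  have h2 := (hasDerivAt_G (r * x + s)).comp x h1
  have h3 := h2.const_mul r⁻¹
  exact h3.congr_deriv (by field_simp)

lemma int_pos (a b : ℝ) (ha : a < 0) :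
    IntegrableOn (fun x => gcdf (a * x + b)) (Set.Ioi (0:ℝ)) ∧
      (∫ x in Set.Ioi (0:ℝ), gcdf (a * x + b)) = -(a⁻¹ * (b * gcdf b + gpdf b)) := by
  have hane : a ≠ 0 := ha.ne
  have hderiv : ∀ x ∈ Set.Ici (0:ℝ), HasDerivAt
      (fun x => a⁻¹ * ((a * x + b) * gcdf (a * x + b) + gpdf (a * x + b)))
      (gcdf (a * x + b)) x := fun x _ => hasDerivAt_G_affine hane b x
  have hpos : ∀ x ∈ Set.Ioi (0:ℝ), 0 ≤ gcdf (a * x + b) := fun x _ => gcdf_nonneg _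
  have haff : Tendsto (fun x : ℝ => a * x + b) atTop atBot :=
    tendsto_atBot_add_const_right _ b ((tendsto_const_mul_atBot_of_neg ha).2 tendsto_id)
  have hlim : Tendsto (fun x => a⁻¹ * ((a * x + b) * gcdf (a * x + b) + gpdf (a * x + b)))
      atTop (𝓝 0) := by
    have h := (tendsto_G_atBot.comp haff).const_mul a⁻¹
    rw [mul_zero] at h
    exact h
  refine ⟨integrableOn_Ioi_deriv_of_nonneg' hderiv hpos hlim, ?_⟩
  have h := integral_Ioi_of_hasDerivAt_of_nonneg' hderiv hpos hlim
  rw [h]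
  norm_num

lemma int_neg_piece (c b : ℝ) (hc : 0 < c) :
    IntegrableOn (fun y => 1 - gcdf (c * y + b)) (Set.Ioi (0:ℝ)) ∧
      (∫ y in Set.Ioi (0:ℝ), (1 - gcdf (c * y + b))) =
        -(b / c) + c⁻¹ * (b * gcdf b + gpdf b) := by
  have hcne : c ≠ 0 := hc.ne'
  have hderiv : ∀ y ∈ Set.Ici (0:ℝ), HasDerivAt
      (fun y => y - c⁻¹ * ((c * y + b) * gcdf (c * y + b) + gpdf (c * y + b)))
      (1 - gcdf (c * y + b)) y := fun y _ =>
    (hasDerivAt_id y).sub (hasDerivAt_G_affine hcne b y)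
  have hpos : ∀ y ∈ Set.Ioi (0:ℝ), 0 ≤ 1 - gcdf (c * y + b) := fun y _ => by
    linarith [gcdf_le_one (c * y + b)]
  have haff : Tendsto (fun y : ℝ => c * y + b) atTop atTop :=
    tendsto_atTop_add_const_right _ b ((tendsto_const_mul_atTop_of_pos hc).2 tendsto_id)
  have hkey : ∀ y : ℝ, y - c⁻¹ * ((c * y + b) * gcdf (c * y + b) + gpdf (c * y + b)) =
      -(b / c) - c⁻¹ * ((c * y + b) * (gcdf (c * y + b) - 1) + gpdf (c * y + b)) := by
    intro y; field_simp; ring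
  have hlim : Tendsto
      (fun y => y - c⁻¹ * ((c * y + b) * gcdf (c * y + b) + gpdf (c * y + b)))
      atTop (𝓝 (-(b / c))) := by
    have h1 := (tendsto_D_atTop.comp haff).const_mul c⁻¹
    rw [mul_zero] at h1
    have h2 := (tendsto_const_nhds (α := ℝ) (x := -(b / c))).sub h1
    rw [sub_zero] at h2
    exact h2.congr fun y => (hkey y).symm
  refine ⟨integrableOn_Ioi_deriv_of_nonneg' hderiv hpos hlim, ?_⟩
  have h := integral_Ioi_of_hasDerivAt_of_nonneg' hderiv hpos hlim
  rw [h]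
  norm_num

lemma integrableOn_Iio_comp_neg {f : ℝ → ℝ} (hf : IntegrableOn f (Set.Ioi (0:ℝ))) :
    IntegrableOn (fun x => f (-x)) (Set.Iio (0:ℝ)) := by
  have h1 : Integrable ((Set.Ioi (0:ℝ)).indicator f) :=
    (integrable_indicator_iff measurableSet_Ioi).2 hf
  have h2 := h1.comp_neg
  have h3 : (fun x => (Set.Ioi (0:ℝ)).indicator f (-x))
      = (Set.Iio (0:ℝ)).indicator (fun x => f (-x)) := by
    funext x
    simp only [Set.indicator_apply, Set.mem_Ioi, Set.mem_Iio, neg_pos]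
  rw [h3] at h2
  exact (integrable_indicator_iff measurableSet_Iio).1 h2

/-- **Lemma B.4 (normal integral identity).**
For `a < 0` and `b ∈ ℝ`,
`∫ℝ |Φ(ax + b) − 1{x<0}| dx = (2φ(b) + 2Φ(b)b − b)/(−a)`. -/
theorem normal_integral (a b : ℝ) (ha : a < 0) :
    (∫ x : ℝ, |gcdf (a * x + b) - (Set.Iio (0 : ℝ)).indicator (fun _ => (1 : ℝ)) x|) =
      (2 * gpdf b + 2 * gcdf b * b - b) / (-a) := by
  have hane : a ≠ 0 := ha.ne
  have hc : 0 < -a := neg_pos.2 ha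
  set F : ℝ → ℝ :=
    fun x => |gcdf (a * x + b) - (Set.Iio (0:ℝ)).indicator (fun _ => (1:ℝ)) x| with hF
  have hFpos : ∀ x ∈ Set.Ici (0:ℝ), F x = gcdf (a * x + b) := by
    intro x hx
    have hmem : x ∉ Set.Iio (0:ℝ) := by simpa using hx
    simp only [hF, Set.indicator_of_notMem hmem, sub_zero,
      abs_of_nonneg (gcdf_nonneg (a * x + b))]
  have hFneg : ∀ x ∈ Set.Iio (0:ℝ), F x = 1 - gcdf (a * x + b) := by
    intro x hx
    simp only [hF, Set.indicator_of_mem hx]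
    rw [abs_sub_comm, abs_of_nonneg (by linarith [gcdf_le_one (a * x + b)])]
  obtain ⟨hInt1, hEq1⟩ := int_pos a b ha
  obtain ⟨hInt2, hEq2⟩ := int_neg_piece (-a) b hc
  have hInt2' : IntegrableOn (fun x => 1 - gcdf (a * x + b)) (Set.Iio (0:ℝ)) := by
    have h := integrableOn_Iio_comp_neg hInt2
    have e : (fun x : ℝ => (fun y => 1 - gcdf (-a * y + b)) (-x))
        = fun x => 1 - gcdf (a * x + b) := by
      funext x; norm_num
    rwa [e] at h
  have hIntIci : IntegrableOn F (Set.Ici (0:ℝ)) := by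
    have h0 : IntegrableOn (fun x => gcdf (a * x + b)) (Set.Ici (0:ℝ)) :=
      (integrableOn_Ici_iff_integrableOn_Ioi (f := fun x => gcdf (a * x + b)) (by simp)).2 hInt1
    exact h0.congr_fun (fun x hx => (hFpos x hx).symm) measurableSet_Ici
  have hIntIio : IntegrableOn F (Set.Iio (0:ℝ)) :=
    hInt2'.congr_fun (fun x hx => (hFneg x hx).symm) measurableSet_Iio
  have hsplit : ∫ x, F x = (∫ x in Set.Iio (0:ℝ), F x) + ∫ x in Set.Ici (0:ℝ), F x :=
    (intervalIntegral.integral_Iio_add_Ici hIntIio hIntIci).symm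
  have e1 : ∫ x in Set.Ici (0:ℝ), F x = ∫ x in Set.Ioi (0:ℝ), gcdf (a * x + b) := by
    rw [setIntegral_congr_fun measurableSet_Ici hFpos,
      MeasureTheory.integral_Ici_eq_integral_Ioi]
  have e2 : ∫ x in Set.Iio (0:ℝ), F x
      = ∫ y in Set.Ioi (0:ℝ), (1 - gcdf (-a * y + b)) := by
    rw [setIntegral_congr_fun measurableSet_Iio hFneg,
      ← MeasureTheory.integral_Iic_eq_integral_Iio]
    have h := integral_comp_neg_Iic (0:ℝ) (fun y => 1 - gcdf (-a * y + b))
    rw [neg_zero] at h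
    rw [← h]
    refine setIntegral_congr_fun measurableSet_Iic fun x _ => ?_
    norm_num
  rw [hsplit, e1, e2, hEq1, hEq2]
  field_simp
  ring

end LSBS
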